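/- Let A be a unital Banach algebra, M a unital Banach right A-module, and 𝒯 = [[ℬ(M), M],[0, A]] the associated triangular Banach algebra. If D : 𝒯 → 𝒯 is a bounded derivation, then there exist m₀ ∈ M, a bounded derivation d : A → A, and a bounded d-derivation δ : M → M such that D([[T, x],[0, a]]) = [[δ∘T − T∘δ, δ(x) + m₀a − T(m₀)],[0, d(a)]] for all T ∈ ℬ(M), x ∈ M, a ∈ A. -/

import Mathlib

set_option linter.unusedSectionVars false
set_option maxHeartbeats 1000000

section TriangularCore

variable {A : Type*} [NonUnitalNormedRing A] [NormedSpace ℂ A]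
  [IsScalarTower ℂ A A] [SMulCommClass ℂ A A] [CompleteSpace A]
variable {M : Type*} [NormedAddCommGroup M] [NormedSpace ℂ M] [CompleteSpace M]

/-- The bounded right `A`-module maps on `M` (with right action `p`), as a subspace of the
bounded operators on `M`.  This is the Banach algebra `ℬ(M)`. -/
def BM (p : M →ₗ[ℂ] A →ₗ[ℂ] M) : Submodule ℂ (M →L[ℂ] M) where
  carrier := {T | ∀ (x : M) (a : A), T (p x a) = p (T x) a}
  add_mem' := by
    intro T S hT hS x a
    simp [hT x a, hS x a]
  zero_mem' := by intro x a; simp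
  smul_mem' := by
    intro c T hT x a
    simp [hT x a]

lemma mem_BM {p : M →ₗ[ℂ] A →ₗ[ℂ] M} {T : M →L[ℂ] M} :
    T ∈ BM p ↔ ∀ (x : M) (a : A), T (p x a) = p (T x) a := Iff.rfl

/-- The underlying space of the triangular Banach algebra
`𝒯 = [[ℬ(M), M], [0, A]]` associated to `M`. -/
abbrev Tri (p : M →ₗ[ℂ] A →ₗ[ℂ] M) := (BM p) × M × A

/-- The multiplication of the triangular Banach algebra:
`[[T₁,x₁],[0,a₁]] · [[T₂,x₂],[0,a₂]] = [[T₁T₂, T₁ x₂ + x₁ a₂],[0, a₁ a₂]]`. -/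
def tmul (p : M →ₗ[ℂ] A →ₗ[ℂ] M) (u v : Tri p) : Tri p :=
  (⟨((u.1 : M →L[ℂ] M)).comp (v.1 : M →L[ℂ] M), by
      intro x a
      simp only [ContinuousLinearMap.comp_apply]
      rw [mem_BM.mp v.1.2 x a, mem_BM.mp u.1.2 ((v.1 : M →L[ℂ] M) x) a]⟩,
   (u.1 : M →L[ℂ] M) v.2.1 + p u.2.1 v.2.2,
   u.2.2 * v.2.2)

/-- The norm of the triangular Banach algebra: `‖[[T,x],[0,a]]‖ = ‖T‖ + ‖x‖ + ‖a‖`. -/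
noncomputable def tnorm (p : M →ₗ[ℂ] A →ₗ[ℂ] M) (u : Tri p) : ℝ :=
  ‖(u.1 : M →L[ℂ] M)‖ + ‖u.2.1‖ + ‖u.2.2‖

end TriangularCore

section Aux

variable {A : Type*} [NormedRing A] [NormedAlgebra ℂ A] [CompleteSpace A]
variable {M : Type*} [NormedAddCommGroup M] [NormedSpace ℂ M] [CompleteSpace M]
variable (p : M →ₗ[ℂ] A →ₗ[ℂ] M)

/-- The idempotent `[[1,0],[0,0]]` of the triangular algebra. -/
def Pel : Tri p := (⟨ContinuousLinearMap.id ℂ M, fun _ _ => rfl⟩, 0, 0)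

/-- The idempotent `[[0,0],[0,1]]` of the triangular algebra. -/
noncomputable def Qel : Tri p := (0, 0, 1)

/-- Embedding of `A` in the lower right corner. -/
noncomputable def AembT : A →ₗ[ℂ] Tri p where
  toFun a := (0, 0, a)
  map_add' a b := by
    refine Prod.ext_iff.mpr ⟨?_, Prod.ext_iff.mpr ⟨?_, rfl⟩⟩ <;> simp
  map_smul' c a := by
    refine Prod.ext_iff.mpr ⟨?_, Prod.ext_iff.mpr ⟨?_, rfl⟩⟩ <;> simp

/-- Embedding of `M` in the upper right corner. -/
noncomputable def XembT : M →ₗ[ℂ] Tri p where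
  toFun x := (0, x, 0)
  map_add' x y := by
    refine Prod.ext_iff.mpr ⟨?_, Prod.ext_iff.mpr ⟨rfl, ?_⟩⟩ <;> simp
  map_smul' c x := by
    refine Prod.ext_iff.mpr ⟨?_, Prod.ext_iff.mpr ⟨rfl, ?_⟩⟩ <;> simp

@[simp] lemma Pel_fst : ((Pel p).1 : M →L[ℂ] M) = ContinuousLinearMap.id ℂ M := rfl
@[simp] lemma Pel_snd : (Pel p).2.1 = 0 := rfl
@[simp] lemma Pel_trd : (Pel p).2.2 = 0 := rfl
@[simp] lemma Qel_fst : ((Qel p).1 : M →L[ℂ] M) = 0 := rfl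
@[simp] lemma Qel_snd : (Qel p).2.1 = 0 := rfl
@[simp] lemma Qel_trd : (Qel p).2.2 = 1 := rfl
@[simp] lemma AembT_fst (a : A) : ((AembT p a).1 : M →L[ℂ] M) = 0 := rfl
@[simp] lemma AembT_snd (a : A) : (AembT p a).2.1 = 0 := rfl
@[simp] lemma AembT_trd (a : A) : (AembT p a).2.2 = a := rfl
@[simp] lemma XembT_fst (x : M) : ((XembT p x).1 : M →L[ℂ] M) = 0 := rfl
@[simp] lemma XembT_snd (x : M) : (XembT p x).2.1 = x := rfl
@[simp] lemma XembT_trd (x : M) : (XembT p x).2.2 = 0 := rfl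

lemma tri_eq {u v : Tri p} (h1 : (u.1 : M →L[ℂ] M) = (v.1 : M →L[ℂ] M))
    (h2 : u.2.1 = v.2.1) (h3 : u.2.2 = v.2.2) : u = v :=
  Prod.ext_iff.mpr ⟨Subtype.ext h1, Prod.ext_iff.mpr ⟨h2, h3⟩⟩

end Aux

/-- Let `A` be a unital Banach algebra, `M` a unital Banach right `A`-module
and `𝒯 = [[ℬ(M), M],[0, A]]` the associated triangular Banach algebra.  If `D : 𝒯 → 𝒯` is a
bounded derivation, then there exist `m₀ ∈ M`, a bounded derivation `d : A → A` and a bounded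
`d`-derivation `δ : M → M` such that
`D [[T,x],[0,a]] = [[δ∘T - T∘δ, δ x + m₀ a - T m₀],[0, d a]]`. -/
theorem bounded_derivation_on_triangular_algebra_structure
    {A : Type*} [NormedRing A] [NormedAlgebra ℂ A] [CompleteSpace A]
    {M : Type*} [NormedAddCommGroup M] [NormedSpace ℂ M] [CompleteSpace M]
    (p : M →ₗ[ℂ] A →ₗ[ℂ] M)
    (hp_assoc : ∀ (x : M) (a b : A), p (p x a) b = p x (a * b))
    (hp_norm : ∀ (x : M) (a : A), ‖p x a‖ ≤ ‖x‖ * ‖a‖)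
    (hp_one : ∀ x : M, p x 1 = x)
    (D : Tri p →ₗ[ℂ] Tri p)
    (hD_der : ∀ u v : Tri p, D (tmul p u v) = tmul p (D u) v + tmul p u (D v))
    (hD_bdd : ∃ C : ℝ, ∀ u : Tri p, tnorm p (D u) ≤ C * tnorm p u) :
    ∃ (m₀ : M) (d : A →L[ℂ] A) (δ : M →L[ℂ] M),
      (∀ a b : A, d (a * b) = d a * b + a * d b) ∧
      (∀ (x : M) (a : A), δ (p x a) = p (δ x) a + p x (d a)) ∧
      ∀ u : Tri p,
        ((D u).1 : M →L[ℂ] M) = δ.comp (u.1 : M →L[ℂ] M) - ((u.1 : M →L[ℂ] M)).comp δ ∧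
        (D u).2.1 = δ u.2.1 + p m₀ u.2.2 - (u.1 : M →L[ℂ] M) m₀ ∧
        (D u).2.2 = d u.2.2 := by
  obtain ⟨C, hC⟩ := hD_bdd
  -- component computations for tmul and addition
  have tm1 : ∀ u v : Tri p, ((tmul p u v).1 : M →L[ℂ] M)
      = ((u.1 : M →L[ℂ] M)).comp (v.1 : M →L[ℂ] M) := fun _ _ => rfl
  have tm2 : ∀ u v : Tri p, (tmul p u v).2.1
      = (u.1 : M →L[ℂ] M) v.2.1 + p u.2.1 v.2.2 := fun _ _ => rfl
  have tm3 : ∀ u v : Tri p, (tmul p u v).2.2 = u.2.2 * v.2.2 := fun _ _ => rfl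
  have ad1 : ∀ u v : Tri p, ((u + v).1 : M →L[ℂ] M)
      = (u.1 : M →L[ℂ] M) + (v.1 : M →L[ℂ] M) := fun _ _ => rfl
  have ad2 : ∀ u v : Tri p, (u + v).2.1 = u.2.1 + v.2.1 := fun _ _ => rfl
  have ad3 : ∀ u v : Tri p, (u + v).2.2 = u.2.2 + v.2.2 := fun _ _ => rfl
  have c1 : ∀ {u v : Tri p}, u = v → ((u.1 : M →L[ℂ] M)) = (v.1 : M →L[ℂ] M) :=
    fun h => by rw [h]
  have c2 : ∀ {u v : Tri p}, u = v → u.2.1 = v.2.1 := fun h => by rw [h]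
  have c3 : ∀ {u v : Tri p}, u = v → u.2.2 = v.2.2 := fun h => by rw [h]
  -- multiplicative identities among corner elements
  have hPP : tmul p (Pel p) (Pel p) = Pel p :=
    tri_eq p (by rw [tm1]; simp) (by rw [tm2]; simp) (by rw [tm3]; simp)
  have hQQ : tmul p (Qel p) (Qel p) = Qel p :=
    tri_eq p (by rw [tm1]; simp) (by rw [tm2]; simp) (by rw [tm3]; simp)
  have hPQ : tmul p (Pel p) (Qel p) = 0 :=
    tri_eq p (by rw [tm1]; simp) (by rw [tm2]; simp) (by rw [tm3]; simp)
  have hQA : ∀ a : A, tmul p (Qel p) (AembT p a) = AembT p a :=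
    fun a => tri_eq p (by rw [tm1]; simp) (by rw [tm2]; simp) (by rw [tm3]; simp)
  have hPX : ∀ x : M, tmul p (Pel p) (XembT p x) = XembT p x :=
    fun x => tri_eq p (by rw [tm1]; simp) (by rw [tm2]; simp) (by rw [tm3]; simp)
  have hXQ : ∀ x : M, tmul p (XembT p x) (Qel p) = XembT p x :=
    fun x => tri_eq p (by rw [tm1]; simp) (by rw [tm2]; simp [hp_one]) (by rw [tm3]; simp)
  have hXA : ∀ (x : M) (a : A), tmul p (XembT p x) (AembT p a) = XembT p (p x a) :=
    fun x a => tri_eq p (by rw [tm1]; simp) (by rw [tm2]; simp) (by rw [tm3]; simp)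
  have hAA : ∀ a b : A, tmul p (AembT p a) (AembT p b) = AembT p (a * b) :=
    fun a b => tri_eq p (by rw [tm1]; simp) (by rw [tm2]; simp) (by rw [tm3]; simp)
  have hTP : ∀ T : BM p, tmul p (T, 0, 0) (Pel p) = (T, 0, 0) :=
    fun T => tri_eq p (by rw [tm1]; simp) (by rw [tm2]; simp) (by rw [tm3]; simp)
  have hTX : ∀ (T : BM p) (x : M),
      tmul p (T, 0, 0) (XembT p x) = XembT p ((T : M →L[ℂ] M) x) :=
    fun T x => tri_eq p (by rw [tm1]; simp) (by rw [tm2]; simp) (by rw [tm3]; simp)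
  -- structure of D P and D Q
  have hP' : D (Pel p) = tmul p (D (Pel p)) (Pel p) + tmul p (Pel p) (D (Pel p)) := by
    have h := hD_der (Pel p) (Pel p); rwa [hPP] at h
  have hQ' : D (Qel p) = tmul p (D (Qel p)) (Qel p) + tmul p (Qel p) (D (Qel p)) := by
    have h := hD_der (Qel p) (Qel p); rwa [hQQ] at h
  have hDQ1 : ((D (Qel p)).1 : M →L[ℂ] M) = 0 := by
    have h := c1 hQ'
    rw [ad1, tm1, tm1] at h
    simpa using h
  have hDQ3 : (D (Qel p)).2.2 = 0 := by
    have h := c3 hQ'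
    rw [ad3, tm3, tm3] at h
    simp only [Qel_trd, mul_one, one_mul] at h
    exact left_eq_add.mp h
  set m₀ : M := (D (Qel p)).2.1 with hm₀def
  have hDP3 : (D (Pel p)).2.2 = 0 := by
    have h := c3 hP'
    rw [ad3, tm3, tm3] at h
    simpa using h
  have hDP2 : (D (Pel p)).2.1 = -m₀ := by
    have h := hD_der (Pel p) (Qel p)
    rw [hPQ, map_zero] at h
    have h2 := c2 h.symm
    rw [ad2, tm2, tm2] at h2
    simp only [Qel_snd, Qel_trd, Pel_fst, Pel_snd, map_zero, hp_one,
      ContinuousLinearMap.coe_id', id_eq, LinearMap.zero_apply, zero_add, add_zero] at h2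
    -- h2 : (D (Pel p)).2.1 + (D (Qel p)).2.1 = 0  (up to simp normal form)
    rw [hm₀def]
    exact eq_neg_of_add_eq_zero_left h2
  -- the derivation d on A and the map δ on M
  let π₂ : Tri p →ₗ[ℂ] M := (LinearMap.fst ℂ M A).comp (LinearMap.snd ℂ (BM p) (M × A))
  let π₃ : Tri p →ₗ[ℂ] A := (LinearMap.snd ℂ M A).comp (LinearMap.snd ℂ (BM p) (M × A))
  let dlin : A →ₗ[ℂ] A := π₃ ∘ₗ (D ∘ₗ AembT p)
  let δlin : M →ₗ[ℂ] M := π₂ ∘ₗ (D ∘ₗ XembT p)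
  have habc2 : ∀ u : Tri p, ‖u.2.1‖ ≤ tnorm p u := by
    intro u; unfold tnorm
    have := norm_nonneg ((u.1 : M →L[ℂ] M)); have := norm_nonneg u.2.2; linarith
  have habc3 : ∀ u : Tri p, ‖u.2.2‖ ≤ tnorm p u := by
    intro u; unfold tnorm
    have := norm_nonneg ((u.1 : M →L[ℂ] M)); have := norm_nonneg u.2.1; linarith
  have hAnorm : ∀ a : A, tnorm p (AembT p a) = ‖a‖ := by
    intro a; unfold tnorm; simp
  have hXnorm : ∀ x : M, tnorm p (XembT p x) = ‖x‖ := by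
    intro x; unfold tnorm; simp
  have hd_bdd : ∃ C' : ℝ, ∀ a : A, ‖dlin a‖ ≤ C' * ‖a‖ := by
    refine ⟨C, fun a => ?_⟩
    calc ‖dlin a‖ = ‖(D (AembT p a)).2.2‖ := rfl
      _ ≤ tnorm p (D (AembT p a)) := habc3 _
      _ ≤ C * tnorm p (AembT p a) := hC _
      _ = C * ‖a‖ := by rw [hAnorm]
  have hδ_bdd : ∃ C' : ℝ, ∀ x : M, ‖δlin x‖ ≤ C' * ‖x‖ := by
    refine ⟨C, fun x => ?_⟩
    calc ‖δlin x‖ = ‖(D (XembT p x)).2.1‖ := rfl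
      _ ≤ tnorm p (D (XembT p x)) := habc2 _
      _ ≤ C * tnorm p (XembT p x) := hC _
      _ = C * ‖x‖ := by rw [hXnorm]
  let d : A →L[ℂ] A := dlin.mkContinuousOfExistsBound hd_bdd
  let δ : M →L[ℂ] M := δlin.mkContinuousOfExistsBound hδ_bdd
  have hd_apply : ∀ a : A, d a = (D (AembT p a)).2.2 := fun _ => rfl
  have hδ_apply : ∀ x : M, δ x = (D (XembT p x)).2.1 := fun _ => rfl
  -- d is a derivation
  have hd_der : ∀ a b : A, d (a * b) = d a * b + a * d b := by
    intro a b
    have h := hD_der (AembT p a) (AembT p b)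
    rw [hAA] at h
    have h3 := c3 h
    rw [ad3, tm3, tm3] at h3
    simp only [AembT_trd] at h3
    rw [hd_apply, hd_apply, hd_apply]
    exact h3
  -- structure of D on the A-corner
  have hDA1 : ∀ a : A, ((D (AembT p a)).1 : M →L[ℂ] M) = 0 := by
    intro a
    have h := hD_der (Qel p) (AembT p a)
    rw [hQA] at h
    have h1 := c1 h
    rw [ad1, tm1, tm1, hDQ1] at h1
    simpa using h1
  have hDA2 : ∀ a : A, (D (AembT p a)).2.1 = p m₀ a := by
    intro a
    have h := hD_der (Qel p) (AembT p a)
    rw [hQA] at h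
    have h2 := c2 h
    rw [ad2, tm2, tm2] at h2
    simpa [hm₀def] using h2
  -- structure of D on the M-corner
  have hDX1 : ∀ x : M, ((D (XembT p x)).1 : M →L[ℂ] M) = 0 := by
    intro x
    have h := hD_der (XembT p x) (Qel p)
    rw [hXQ] at h
    have h1 := c1 h
    rw [ad1, tm1, tm1] at h1
    simpa using h1
  have hDX3 : ∀ x : M, (D (XembT p x)).2.2 = 0 := by
    intro x
    have h := hD_der (Pel p) (XembT p x)
    rw [hPX] at h
    have h3 := c3 h
    rw [ad3, tm3, tm3] at h3
    simpa using h3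
  -- δ is a d-derivation
  have hδ_der : ∀ (x : M) (a : A), δ (p x a) = p (δ x) a + p x (d a) := by
    intro x a
    have h := hD_der (XembT p x) (AembT p a)
    rw [hXA] at h
    have h2 := c2 h
    rw [ad2, tm2, tm2] at h2
    rw [hδ_apply, hδ_apply, hd_apply]
    simpa using h2
  -- structure of D on the operator corner
  have hDT3 : ∀ T : BM p, (D ((T, 0, 0) : Tri p)).2.2 = 0 := by
    intro T
    have h := hD_der ((T, 0, 0) : Tri p) (Pel p)
    rw [hTP] at h
    have h3 := c3 h
    rw [ad3, tm3, tm3] at h3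
    simpa using h3
  have hDT2 : ∀ T : BM p, (D ((T, 0, 0) : Tri p)).2.1 = -((T : M →L[ℂ] M) m₀) := by
    intro T
    have h := hD_der ((T, 0, 0) : Tri p) (Pel p)
    rw [hTP] at h
    have h2 := c2 h
    rw [ad2, tm2, tm2, hDP2] at h2
    simpa using h2
  have hDT1 : ∀ T : BM p, ((D ((T, 0, 0) : Tri p)).1 : M →L[ℂ] M)
      = δ.comp (T : M →L[ℂ] M) - ((T : M →L[ℂ] M)).comp δ := by
    intro T
    ext x
    have h := hD_der ((T, 0, 0) : Tri p) (XembT p x)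
    rw [hTX] at h
    have h2 := c2 h
    rw [ad2, tm2, tm2] at h2
    simp only [XembT_snd, XembT_trd, map_zero, add_zero, zero_add] at h2
    have h2' : (D (XembT p ((T : M →L[ℂ] M) x))).2.1
        = ((D ((T, 0, 0) : Tri p)).1 : M →L[ℂ] M) x + (T : M →L[ℂ] M) (D (XembT p x)).2.1 := by
      simpa using h2
    rw [ContinuousLinearMap.sub_apply, ContinuousLinearMap.comp_apply,
      ContinuousLinearMap.comp_apply, hδ_apply, hδ_apply, h2']
    abel
  -- decomposition of a general element
  have hdecomp : ∀ u : Tri p, u = ((u.1, 0, 0) : Tri p) + XembT p u.2.1 + AembT p u.2.2 := by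
    intro u
    refine (tri_eq p ?_ ?_ ?_).symm
    · rw [ad1, ad1]; simp
    · rw [ad2, ad2]; simp
    · rw [ad3, ad3]; simp
  refine ⟨m₀, d, δ, hd_der, hδ_der, fun u => ?_⟩
  have hu := congrArg D (hdecomp u)
  rw [map_add, map_add] at hu
  refine ⟨?_, ?_, ?_⟩
  · have h := c1 hu
    rw [ad1, ad1, hDT1 u.1, hDX1 u.2.1, hDA1 u.2.2] at h
    simpa using h
  · have h := c2 hu
    rw [ad2, ad2, hDT2 u.1, hDA2 u.2.2] at h
    rw [hδ_apply, h]
    abel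
  · have h := c3 hu
    rw [ad3, ad3, hDT3 u.1, hDX3 u.2.1] at h
    rw [hd_apply, h]
    abel
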